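/- Let X be a compact complex n-manifold with a balanced metric ω of Hodge-Riemann type (ω^{n-1}/(n-1)! = ω₀ ∧ Ω₀, Ω₀ closed and pointwise Hodge-Riemann for (1,1)). If a rank r holomorphic vector bundle E admits a Hermitian-Einstein metric h, i.e. √-1 F_{(E,h)} ∧ ω₀ ∧ Ω₀ = λ · Id · ω₀² ∧ Ω₀, then ∫_X (2r c₂(E) - (r-1) c₁(E)²) ∧ Ω₀ ≥ 0, with equality if and only if the trace-free part of F_{(E,h)} vanishes (E is projectively flat). -/

import Mathlib

open scoped ComplexOrder

/-- An abstract model of the graded algebra of smooth complex-valued differential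
forms on a compact Hermitian complex manifold `(X, ω)` of complex dimension `n`,
together with the standard operators of Hermitian geometry: the type
decomposition into `(p,q)`-forms, conjugation, the Dolbeault operators `∂`, `∂̄`,
integration over `X`, the `L²` inner product with the formal adjoints `∂*`,
`∂̄*`, `d*`, the dual Lefschetz operator `Λ`, and positivity notions. -/
structure CpxMfd (n : ℕ) where
  /-- the smooth complex-valued differential forms on `X` -/
  A : Type
  [ringA : Ring A]
  [algC : Algebra ℂ A]
  [algR : Algebra ℝ A]
  [tower : IsScalarTower ℝ ℂ A]
  /-- forms of type `(p,q)` -/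
  Λ : ℕ → ℕ → Submodule ℂ A
  mul_mem : ∀ {p q r s : ℕ} {a b : A}, a ∈ Λ p q → b ∈ Λ r s → a * b ∈ Λ (p + r) (q + s)
  one_mem : (1 : A) ∈ Λ 0 0
  /-- complex conjugation of forms -/
  conj : A →ₗ[ℝ] A
  conj_conj : ∀ a, conj (conj a) = a
  conj_mul : ∀ a b, conj (a * b) = conj a * conj b
  conj_smul : ∀ (c : ℂ) (a : A), conj (c • a) = starRingEnd ℂ c • conj a
  conj_mem : ∀ {p q : ℕ} {a : A}, a ∈ Λ p q → conj a ∈ Λ q p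
  /-- the Dolbeault operator `∂` -/
  pa : A →ₗ[ℂ] A
  /-- the Dolbeault operator `∂̄` -/
  pb : A →ₗ[ℂ] A
  pa_mem : ∀ {p q : ℕ} {a : A}, a ∈ Λ p q → pa a ∈ Λ (p + 1) q
  pb_mem : ∀ {p q : ℕ} {a : A}, a ∈ Λ p q → pb a ∈ Λ p (q + 1)
  conj_pa : ∀ a, conj (pa a) = pb (conj a)
  /-- integration of (top-degree) forms over the compact manifold `X` -/
  integral : A →ₗ[ℝ] ℂ
  /-- Stokes' theorem: the integral of an exact form vanishes -/
  stokes : ∀ a, integral (pa a + pb a) = 0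
  /-- `pos11 a` : `a` is a (strictly) positive real `(1,1)`-form -/
  pos11 : A → Prop
  pos11_mem : ∀ {a}, pos11 a → a ∈ Λ 1 1 ∧ conj a = a
  /-- the fundamental `(1,1)`-form of the Hermitian metric on `X` -/
  ω : A
  ω_pos : pos11 ω
  /-- `posFn f` : `f` is a (strictly) positive smooth function -/
  posFn : A → Prop
  posFn_mem : ∀ {a}, posFn a → a ∈ Λ 0 0 ∧ conj a = a
  /-- `stronglyPos k a` : `a` is a strongly positive `(k,k)`-form -/
  stronglyPos : ℕ → A → Prop
  stronglyPos_one : stronglyPos 0 1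
  stronglyPos_mul : ∀ {a k b}, pos11 a → stronglyPos k b → stronglyPos (k + 1) (a * b)
  /-- `nonposTop a` : the top-degree form `a` is pointwise nonpositive -/
  nonposTop : A → Prop
  nonposTop_integral : ∀ {a}, nonposTop a → integral a ≤ 0
  /-- the `L²` hermitian inner product of forms determined by `ω` -/
  inner : A → A → ℂ
  /-- the formal adjoint `∂*` -/
  adjPa : A →ₗ[ℂ] A
  adjPa_spec : ∀ a b, inner (pa a) b = inner a (adjPa b)
  /-- the formal adjoint `∂̄*` -/
  adjPb : A →ₗ[ℂ] A
  adjPb_spec : ∀ a b, inner (pb a) b = inner a (adjPb b)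
  /-- the formal adjoint `d*` -/
  adjD : A →ₗ[ℂ] A
  adjD_spec : ∀ a b, inner (pa a + pb a) b = inner a (adjD b)
  /-- the dual Lefschetz operator `Λ`, the adjoint of wedging with `ω` -/
  lam : A →ₗ[ℂ] A
  lam_spec : ∀ a b, inner (ω * a) b = inner a (lam b)

attribute [instance] CpxMfd.ringA CpxMfd.algC CpxMfd.algR CpxMfd.tower

namespace CpxMfd

variable {n : ℕ} (M : CpxMfd n)

/-- the exterior derivative `d = ∂ + ∂̄` -/
def d : M.A →ₗ[ℂ] M.A := M.pa + M.pb

/-- a form is real if it is fixed by conjugation -/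
def IsReal (a : M.A) : Prop := M.conj a = a

/-- `ω` is a balanced hermitian metric of Hodge-Riemann type with respect to the
decomposition `ω^(n-1)/(n-1)! = ω₀ ∧ Ω₀`:  `ω₀` is a positive `(1,1)`-form,
`Ω₀` is a closed real `(n-2,n-2)`-form which satisfies the Hodge-Riemann
positivity property in degrees `(p,q)`, `p + q = 2` (on `(ω₀,Ω₀)`-primitive
forms in degree `(1,1)`), and `ω₀ ∧ Ω₀` is closed (equivalently, `ω` is
balanced). -/
def IsBalancedHR (ω ω₀ Ω₀ : M.A) : Prop :=
  M.pos11 ω ∧ M.pos11 ω₀ ∧ Ω₀ ∈ M.Λ (n - 2) (n - 2) ∧ M.IsReal Ω₀ ∧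
    (((n - 1).factorial : ℂ))⁻¹ • ω ^ (n - 1) = ω₀ * Ω₀ ∧
    M.d Ω₀ = 0 ∧ M.d (ω₀ * Ω₀) = 0 ∧
    (∀ α ∈ M.Λ 1 1, α * (ω₀ * Ω₀) = 0 → α ≠ 0 →
      0 < -M.integral (α * M.conj α * Ω₀)) ∧
    (∀ α ∈ M.Λ 2 0, α ≠ 0 → 0 < M.integral (α * M.conj α * Ω₀))

end CpxMfd

/-- the hermitian adjoint of a matrix of forms (i.e. of an `End(E)`-valued form
written in a unitary frame of a hermitian bundle `(E,h)`) -/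
def madj {n r : ℕ} (M : CpxMfd n) (f : Matrix (Fin r) (Fin r) M.A) :
    Matrix (Fin r) (Fin r) M.A :=
  Matrix.of fun i j => M.conj (f j i)

/-- Bogomolov-Miyaoka-Yau inequality: on a compact complex
`n`-manifold with a balanced metric `ω` of Hodge-Riemann type
(`ω^(n-1)/(n-1)! = ω₀ ∧ Ω₀`), if a rank `r` holomorphic bundle `E` carries a
Hermitian-Einstein metric `h`, i.e. the curvature `F` of the Chern connection
satisfies `√-1 F ∧ ω₀ ∧ Ω₀ = λ · Id · ω₀² ∧ Ω₀`, then
`∫_X (2r c₂(E) - (r-1) c₁(E)²) ∧ Ω₀ ≥ 0`, where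
`c₁ = (√-1/2π) tr F` and `c₂ = (1/8π²)(tr(F ∧ F) - tr F ∧ tr F)`, with
equality iff the trace-free part of `F` vanishes (`E` is projectively flat). -/
theorem bmy_inequality {n r : ℕ} (hr : 0 < r) (M : CpxMfd n) (ω₀ Ω₀ : M.A)
    (hBHR : M.IsBalancedHR M.ω ω₀ Ω₀)
    (F : Matrix (Fin r) (Fin r) M.A)
    (h11 : ∀ i j, F i j ∈ M.Λ 1 1)
    (hherm : ∀ i j, M.conj (F i j) = -F j i)
    (lam : ℝ)
    (hHE : ∀ i j, Complex.I • (F i j * (ω₀ * Ω₀)) =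
      (if i = j then (lam : ℂ) else 0) • (ω₀ ^ 2 * Ω₀)) :
    0 ≤ M.integral
        (((2 * r : ℂ) • (((8 : ℂ) * (Real.pi : ℂ) ^ 2)⁻¹ •
              (Matrix.trace (F * F) - Matrix.trace F * Matrix.trace F))
            - ((r : ℂ) - 1) • ((Complex.I / (2 * (Real.pi : ℂ))) • Matrix.trace F *
                (Complex.I / (2 * (Real.pi : ℂ))) • Matrix.trace F)) * Ω₀) ∧
      (M.integral
        (((2 * r : ℂ) • (((8 : ℂ) * (Real.pi : ℂ) ^ 2)⁻¹ •
              (Matrix.trace (F * F) - Matrix.trace F * Matrix.trace F))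
            - ((r : ℂ) - 1) • ((Complex.I / (2 * (Real.pi : ℂ))) • Matrix.trace F *
                (Complex.I / (2 * (Real.pi : ℂ))) • Matrix.trace F)) * Ω₀) = 0 ↔
        F = Matrix.of fun i j =>
          if i = j then (r : ℂ)⁻¹ • Matrix.trace F else 0) := by
  classical
  obtain ⟨-, -, -, -, -, -, -, hHR, -⟩ := hBHR
  have hrC : (r : ℂ) ≠ 0 := Nat.cast_ne_zero.mpr hr.ne'
  have hπ : (Real.pi : ℂ) ≠ 0 := Complex.ofReal_ne_zero.mpr Real.pi_ne_zero
  set T : M.A := Matrix.trace F with hT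
  set G : Fin r → Fin r → M.A :=
    fun i j => F i j - (if i = j then (r : ℂ)⁻¹ • T else 0) with hG
  have hTconj : M.conj T = -T := by
    simp only [hT, Matrix.trace, Matrix.diag, map_sum, hherm, Finset.sum_neg_distrib]
  have hTmem : T ∈ M.Λ 1 1 := by
    simp only [hT, Matrix.trace, Matrix.diag]
    exact Submodule.sum_mem _ fun i _ => h11 i i
  have hRsmul : ∀ (c : ℝ) (x : M.A), (c : ℂ) • x = c • x := by
    intro c x
    have := smul_assoc c (1:ℂ) x
    rw [Complex.real_smul, mul_one, one_smul] at this
    exact this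
  have hGmem : ∀ i j, G i j ∈ M.Λ 1 1 := by
    intro i j
    refine Submodule.sub_mem _ (h11 i j) ?_
    by_cases h : i = j
    · simp only [if_pos h]; exact Submodule.smul_mem _ _ hTmem
    · simp [h]
  have hGconj : ∀ i j, M.conj (G i j) = -G j i := by
    intro i j
    by_cases h : i = j
    · subst h
      simp only [hG, eq_self_iff_true, if_true, map_sub, hherm, M.conj_smul, hTconj]
      have : (starRingEnd ℂ) (r : ℂ)⁻¹ = (r : ℂ)⁻¹ := by
        simp [map_inv₀]
      rw [this, smul_neg]
      abel
    · simp only [hG, if_neg h, if_neg (Ne.symm h), sub_zero, hherm]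
  have hW : ∀ i j, F i j * (ω₀ * Ω₀)
      = (if i = j then (-Complex.I * (lam : ℂ)) else 0) • (ω₀ ^ 2 * Ω₀) := by
    intro i j
    have h := congrArg (fun x => (-Complex.I) • x) (hHE i j)
    simp only [smul_smul, neg_mul, Complex.I_mul_I, neg_neg, one_smul] at h
    rw [h]
    by_cases hij : i = j <;> simp [hij]
  have hTW : T * (ω₀ * Ω₀) = ((r : ℂ) * (-Complex.I * (lam : ℂ))) • (ω₀ ^ 2 * Ω₀) := by
    simp only [hT, Matrix.trace, Matrix.diag]
    rw [Finset.sum_mul]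
    have : ∀ i : Fin r, F i i * (ω₀ * Ω₀) = (-Complex.I * (lam : ℂ)) • (ω₀ ^ 2 * Ω₀) := by
      intro i; rw [hW i i, if_pos rfl]
    rw [Finset.sum_congr rfl fun i _ => this i, Finset.sum_const, Finset.card_univ,
      Fintype.card_fin, ← Nat.cast_smul_eq_nsmul ℂ, smul_smul]
  have hGprim : ∀ i j, G i j * (ω₀ * Ω₀) = 0 := by
    intro i j
    simp only [hG]
    rw [sub_mul]
    by_cases h : i = j
    · subst h
      rw [if_pos rfl, smul_mul_assoc, hTW, hW, if_pos rfl, smul_smul,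
        inv_mul_cancel_left₀ hrC, sub_self]
    · rw [if_neg h, hW, if_neg h, zero_smul, zero_mul, sub_zero]
  -- the key algebraic sum identity
  have hsum : (∑ i : Fin r, ∑ j : Fin r, G i j * G j i)
      = Matrix.trace (F * F) - (r : ℂ)⁻¹ • (T * T) := by
    have expand : ∀ i j : Fin r, G i j * G j i
        = F i j * F j i - (if i = j then
            ((r : ℂ)⁻¹ • (F i i * T) + (r : ℂ)⁻¹ • (T * F i i)
              - ((r : ℂ)⁻¹ * (r : ℂ)⁻¹) • (T * T)) else 0) := by
      intro i j
      by_cases h : i = j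
      · subst h
        simp only [hG, eq_self_iff_true, if_true]
        rw [sub_mul, mul_sub, mul_sub]
        simp only [smul_mul_assoc, mul_smul_comm, smul_smul]
        abel
      · simp only [hG, if_neg h, if_neg (Ne.symm h), sub_zero]
    rw [Finset.sum_congr rfl fun i _ => Finset.sum_congr rfl fun j _ => expand i j]
    simp only [Finset.sum_sub_distrib, Finset.sum_ite_eq, Finset.mem_univ, if_true,
      Finset.sum_add_distrib]
    have h1 : Matrix.trace (F * F) = ∑ i : Fin r, ∑ j : Fin r, F i j * F j i := by
      simp [Matrix.trace, Matrix.diag, Matrix.mul_apply]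
    have h2 : (∑ i : Fin r, (r : ℂ)⁻¹ • (F i i * T)) = (r : ℂ)⁻¹ • (T * T) := by
      rw [← Finset.smul_sum, ← Finset.sum_mul]
      rfl
    have h3 : (∑ i : Fin r, (r : ℂ)⁻¹ • (T * F i i)) = (r : ℂ)⁻¹ • (T * T) := by
      rw [← Finset.smul_sum, ← Finset.mul_sum]
      rfl
    have h4 : (∑ _i : Fin r, ((r : ℂ)⁻¹ * (r : ℂ)⁻¹) • (T * T))
        = (r : ℂ)⁻¹ • (T * T) := by
      rw [Finset.sum_const, Finset.card_univ, Fintype.card_fin,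
        ← Nat.cast_smul_eq_nsmul ℂ, smul_smul]
      congr 1
      field_simp
    rw [← h1, h2, h3, h4]
    abel
  -- the integrand as a positive multiple of the sum of primitive norms
  set S : M.A := ((2 * r : ℂ) • (((8 : ℂ) * (Real.pi : ℂ) ^ 2)⁻¹ •
        (Matrix.trace (F * F) - Matrix.trace F * Matrix.trace F))
      - ((r : ℂ) - 1) • ((Complex.I / (2 * (Real.pi : ℂ))) • Matrix.trace F *
          (Complex.I / (2 * (Real.pi : ℂ))) • Matrix.trace F)) with hS
  have hSid : S = ((r : ℂ) / (4 * (Real.pi : ℂ) ^ 2)) •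
      (Matrix.trace (F * F) - (r : ℂ)⁻¹ • (T * T)) := by
    rw [hS, ← hT, smul_mul_assoc, mul_smul_comm, smul_smul, smul_smul, smul_sub,
      smul_sub, smul_smul, smul_smul, sub_sub, ← add_smul]
    have hII : (Complex.I / (2 * (Real.pi : ℂ))) * (Complex.I / (2 * (Real.pi : ℂ)))
        = -(4 * (Real.pi : ℂ) ^ 2)⁻¹ := by
      rw [div_mul_div_comm, Complex.I_mul_I, neg_div, ← one_div, one_div]
      congr 1
      ring
    congr 1
    · congr 1
      field_simp
      ring
    · congr 1
      rw [mul_assoc ((r : ℂ) - 1), hII]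
      field_simp
      ring
  set c : ℝ := (r : ℝ) / (4 * Real.pi ^ 2) with hc
  set t : Fin r → Fin r → ℂ :=
    fun i j => -M.integral (G i j * M.conj (G i j) * Ω₀) with ht
  have htpos : ∀ i j, G i j ≠ 0 → 0 < t i j := by
    intro i j hne
    exact hHR (G i j) (hGmem i j) (hGprim i j) hne
  have htzero : ∀ i j, G i j = 0 → t i j = 0 := by
    intro i j h0
    simp [ht, h0]
  have htnn : ∀ i j, 0 ≤ t i j := by
    intro i j
    by_cases h0 : G i j = 0
    · exact le_of_eq (htzero i j h0).symm
    · exact le_of_lt (htpos i j h0)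
  -- the main computation of the integral
  have hkey : M.integral (S * Ω₀)
      = (c : ℂ) * (∑ i : Fin r, ∑ j : Fin r, t i j) := by
    have hstep : Matrix.trace (F * F) - (r : ℂ)⁻¹ • (T * T)
        = ∑ i : Fin r, ∑ j : Fin r, -(G i j * M.conj (G i j)) := by
      rw [← hsum]
      refine Finset.sum_congr rfl fun i _ => Finset.sum_congr rfl fun j _ => ?_
      rw [hGconj i j, mul_neg, neg_neg]
    have hcast : ((r : ℂ) / (4 * (Real.pi : ℂ) ^ 2)) = (c : ℂ) := by
      rw [hc]
      push_cast
      ring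
    rw [hSid, hstep, hcast, smul_mul_assoc,
      show ∀ y, M.integral ((c : ℂ) • y) = c • M.integral y from fun y => M.integral.map_smul c y,
      Finset.sum_mul]
    simp only [Finset.sum_mul, neg_mul, map_sum, map_neg]
    rw [Complex.real_smul]
  have hc0 : (0 : ℝ) < c := by
    rw [hc]
    have h0r : (0:ℝ) < (r:ℝ) := Nat.cast_pos.mpr hr
    have := Real.pi_pos
    positivity
  have hcC : (0 : ℂ) ≤ (c : ℂ) := Complex.zero_le_real.mpr hc0.le
  have hcne : ((c : ℝ) : ℂ) ≠ 0 := Complex.ofReal_ne_zero.mpr hc0.ne'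
  have hsnn : 0 ≤ ∑ i : Fin r, ∑ j : Fin r, t i j :=
    Finset.sum_nonneg fun i _ => Finset.sum_nonneg fun j _ => htnn i j
  rw [← hS] at *
  constructor
  · rw [hkey]
    exact mul_nonneg hcC hsnn
  · rw [hkey]
    constructor
    · intro h
      have hsum0 : (∑ i : Fin r, ∑ j : Fin r, t i j) = 0 := by
        rcases mul_eq_zero.mp h with h' | h'
        · exact absurd h' hcne
        · exact h'
      have hall : ∀ i ∈ (Finset.univ : Finset (Fin r)), ∀ j ∈ (Finset.univ : Finset (Fin r)), t i j = 0 := by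
        intro i hi
        have := (Finset.sum_eq_zero_iff_of_nonneg
          (fun i _ => Finset.sum_nonneg fun j _ => htnn i j)).mp hsum0 i hi
        exact fun j hj => (Finset.sum_eq_zero_iff_of_nonneg fun j _ => htnn i j).mp this j hj
      have hG0 : ∀ i j, G i j = 0 := by
        intro i j
        by_contra hne
        exact (htpos i j hne).ne' (hall i (Finset.mem_univ i) j (Finset.mem_univ j))
      ext i j
      have := hG0 i j
      simp only [hG, sub_eq_zero] at this
      simpa [Matrix.of_apply, hT] using this
    · intro h
      have hG0 : ∀ i j, G i j = 0 := by
        intro i j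
        simp only [hG, sub_eq_zero]
        conv_lhs => rw [h]
        simp [hT]
      have : (∑ i : Fin r, ∑ j : Fin r, t i j) = 0 :=
        Finset.sum_eq_zero fun i _ => Finset.sum_eq_zero fun j _ => htzero i j (hG0 i j)
      rw [this, mul_zero]
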